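/- Stable Ramsey theorem (qualitative polynomial form): for every positive integer k there exists a constant c = c(k) > 0 such that every finite graph G with no half-graph of length k contains a clique or an independent set of size at least |G|^c. -/

import Mathlib

open Classical

/-- A splitting tree of height `h` rooted at the set `S`. -/
def SpTree {V : Type} (G : SimpleGraph V) : ℕ → Finset V → Prop
  | 0, S => S.Nonempty
  | h+1, S => ∃ c ∈ S, SpTree G h (S.filter fun y => G.Adj c y) ∧
      SpTree G h (S.filter fun y => ¬ G.Adj c y)

theorem sp_halfgraph {V : Type} (G : SimpleGraph V) :
    ∀ (r : ℕ) (S : Finset V), SpTree G (2*r) S →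
      ∃ a b : ℕ → V, (∀ i < r, ∀ j < r, (G.Adj (a i) (b j) ↔ i < j)) ∧
        (∀ i < r, a i ∈ S ∧ b i ∈ S) := by
  intro r
  induction r with
  | zero =>
    intro S hS
    have hS' : S.Nonempty := hS
    obtain ⟨v, _⟩ := hS'
    exact ⟨fun _ => v, fun _ => v, fun i hi => absurd hi (by omega), fun i hi => absurd hi (by omega)⟩
  | succ r ih =>
    intro S hS
    have h2 : 2*(r+1) = (2*r+1)+1 := by ring
    rw [h2] at hS
    obtain ⟨c, hcS, _, hL⟩ := hS
    set L := S.filter (fun y => ¬ G.Adj c y) with hLdef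
    obtain ⟨c', hc'L, hT, _⟩ := hL
    set T := L.filter (fun y => G.Adj c' y) with hTdef
    obtain ⟨a, b, hab, hmem⟩ := ih T hT
    have hc'S : c' ∈ S ∧ ¬ G.Adj c c' := by simpa [hLdef] using hc'L
    have hTfact : ∀ x ∈ T, (x ∈ S ∧ ¬ G.Adj c x) ∧ G.Adj c' x := by
      intro x hx
      simpa [hTdef, hLdef] using hx
    refine ⟨fun n => match n with | 0 => c' | (m+1) => a m,
            fun n => match n with | 0 => c | (m+1) => b m, ?_, ?_⟩
    · intro i hi j hj
      match i, j with
      | 0, 0 =>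
        simp only
        constructor
        · intro h; exact absurd h.symm hc'S.2
        · omega
      | 0, (j+1) =>
        simp only
        have hbT := (hmem j (by omega)).2
        constructor
        · intro _; omega
        · intro _; exact (hTfact _ hbT).2
      | (i+1), 0 =>
        simp only
        have haT := (hmem i (by omega)).1
        constructor
        · intro h; exact absurd h.symm ((hTfact _ haT).1.2)
        · omega
      | (i+1), (j+1) =>
        simp only
        rw [hab i (by omega) j (by omega)]
        omega
    · intro i hi
      match i with
      | 0 => exact ⟨hc'S.1, hcS⟩
      | (m+1) =>
        have h1 := (hmem m (by omega)).1
        have h2 := (hmem m (by omega)).2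
        exact ⟨((hTfact _ h1).1).1, ((hTfact _ h2).1).1⟩

theorem good_subset {V : Type} (G : SimpleGraph V) (δ : ℝ) (h0 : 0 ≤ δ) (h1 : δ ≤ 1) :
    ∀ (h : ℕ) (A : Finset V), ¬ SpTree G h A →
      ∃ B : Finset V, B ⊆ A ∧
        (∀ x ∈ B, ((B.filter fun y => G.Adj x y).card : ℝ) ≤ δ * B.card ∨
          ((B.filter fun y => ¬ G.Adj x y).card : ℝ) ≤ δ * B.card) ∧
        δ ^ h * A.card ≤ B.card := by
  intro h
  induction h with
  | zero =>
    intro A hA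
    have : ¬ A.Nonempty := hA
    rw [Finset.not_nonempty_iff_eq_empty] at this
    subst this
    exact ⟨∅, Finset.Subset.refl _, by simp, by simp⟩
  | succ h ih =>
    intro A hA
    by_cases hg : ∀ x ∈ A, ((A.filter fun y => G.Adj x y).card : ℝ) ≤ δ * A.card ∨
        ((A.filter fun y => ¬ G.Adj x y).card : ℝ) ≤ δ * A.card
    · refine ⟨A, Finset.Subset.refl _, hg, ?_⟩
      have hp : δ ^ (h+1) ≤ 1 := pow_le_one₀ h0 h1
      nlinarith [Nat.cast_nonneg (α := ℝ) A.card]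
    · push_neg at hg
      obtain ⟨x, hxA, hbig1, hbig2⟩ := hg
      have hnot : ¬ (SpTree G h (A.filter fun y => G.Adj x y) ∧
          SpTree G h (A.filter fun y => ¬ G.Adj x y)) := by
        intro ⟨ht1, ht2⟩
        exact hA ⟨x, hxA, ht1, ht2⟩
      have hpow : (0:ℝ) ≤ δ ^ h := pow_nonneg h0 h
      rcases not_and_or.mp hnot with hside | hside
      · obtain ⟨B, hBsub, hBgood, hBcard⟩ := ih _ hside
        refine ⟨B, hBsub.trans (Finset.filter_subset _ _), hBgood, ?_⟩
        calc δ ^ (h+1) * A.card = δ ^ h * (δ * A.card) := by ring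
          _ ≤ δ ^ h * ((A.filter fun y => G.Adj x y).card : ℝ) := by
              apply mul_le_mul_of_nonneg_left hbig1.le hpow
          _ ≤ B.card := hBcard
      · obtain ⟨B, hBsub, hBgood, hBcard⟩ := ih _ hside
        refine ⟨B, hBsub.trans (Finset.filter_subset _ _), hBgood, ?_⟩
        calc δ ^ (h+1) * A.card = δ ^ h * (δ * A.card) := by ring
          _ ≤ δ ^ h * ((A.filter fun y => ¬ G.Adj x y).card : ℝ) := by
              apply mul_le_mul_of_nonneg_left hbig2.le hpow
          _ ≤ B.card := hBcard

theorem greedy {V : Type} (r : V → V → Prop) (hsym : Symmetric r) :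
    ∀ (n : ℕ) (C : Finset V) (d : ℝ), C.card ≤ n → 0 < d →
      (∀ x ∈ C, ∃ D : Finset V, (D.card : ℝ) ≤ d ∧ ∀ y ∈ C, y ∉ D → r x y ∧ x ≠ y) →
      ∃ K : Finset V, K ⊆ C ∧ (K : Set V).Pairwise r ∧ (C.card : ℝ) / d ≤ K.card := by
  intro n
  induction n with
  | zero =>
    intro C d hcard hd _
    have : C = ∅ := Finset.card_eq_zero.mp (by omega)
    subst this
    exact ⟨∅, Finset.Subset.refl _, by simp, by simp⟩
  | succ n ih =>
    intro C d hcard hd hdeg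
    rcases C.eq_empty_or_nonempty with rfl | ⟨x, hx⟩
    · exact ⟨∅, Finset.Subset.refl _, by simp, by simp⟩
    · set C' := C.filter (fun y => r x y ∧ x ≠ y) with hC'
      have hxC' : x ∉ C' := by simp [hC']
      have hss : C' ⊆ C := Finset.filter_subset _ _
      have hlt : C'.card < C.card := Finset.card_lt_card ⟨hss, fun hsub => hxC' (hsub hx)⟩
      have hdeg' : ∀ y ∈ C', ∃ D : Finset V, (D.card : ℝ) ≤ d ∧
          ∀ z ∈ C', z ∉ D → r y z ∧ y ≠ z := by
        intro y hy
        obtain ⟨D, hD1, hD2⟩ := hdeg y (hss hy)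
        exact ⟨D, hD1, fun z hz hzD => hD2 z (hss hz) hzD⟩
      obtain ⟨K, hKsub, hKpair, hKcard⟩ := ih C' d (by omega) hd hdeg'
      have hxK : x ∉ K := fun h => hxC' (hKsub h)
      refine ⟨insert x K, Finset.insert_subset hx (hKsub.trans hss), ?_, ?_⟩
      · rw [Finset.coe_insert]
        rw [haveI : Std.Symm r := ⟨fun _ _ h => hsym h⟩; Set.pairwise_insert_of_symmetric (r := r)]
        refine ⟨hKpair, fun b hb hne => ?_⟩
        exact (Finset.mem_filter.mp (hKsub hb)).2.1
      · rw [Finset.card_insert_of_notMem hxK]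
        obtain ⟨D, hD1, hD2⟩ := hdeg x hx
        have hsub : C ⊆ C' ∪ D := by
          intro y hy
          rw [Finset.mem_union]
          by_cases hyD : y ∈ D
          · exact Or.inr hyD
          · exact Or.inl (Finset.mem_filter.mpr ⟨hy, hD2 y hy hyD⟩)
        have h1 : (C.card : ℝ) ≤ C'.card + d := by
          have hu : C.card ≤ C'.card + D.card :=
            le_trans (Finset.card_le_card hsub) (Finset.card_union_le _ _)
          have hu' : (C.card : ℝ) ≤ (C'.card : ℝ) + (D.card : ℝ) := by exact_mod_cast hu
          linarith
        have h2 : (C.card : ℝ) / d ≤ (C'.card : ℝ) / d + 1 := by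
          rw [div_add' _ _ _ hd.ne', div_le_div_iff₀ hd hd]
          nlinarith
        push_cast
        linarith

theorem stable_ramsey (k : ℕ) (hk : 0 < k) :
    ∃ c : ℝ, 0 < c ∧
      ∀ (V : Type) [Fintype V] (G : SimpleGraph V),
        (¬∃ (a b : Fin k → V), ∀ i j : Fin k, G.Adj (a i) (b j) ↔ i < j) →
        ∃ S : Finset V,
          ((S : Set V).Pairwise G.Adj ∨ (S : Set V).Pairwise fun x y => ¬ G.Adj x y) ∧
          (Fintype.card V : ℝ) ^ c ≤ (S.card : ℝ) := by
  set c : ℝ := 1/(8*(k:ℝ)+4) with hcdef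
  have hc0 : 0 < c := by positivity
  refine ⟨c, hc0, ?_⟩
  intro V _ G hno
  set n : ℕ := Fintype.card V with hn
  by_cases hsmall : ((n:ℝ)) ^ c ≤ 2
  · -- small case: n ≤ 1 or take a pair
    rcases Nat.lt_or_ge n 2 with hlt | hge
    · rcases (show n = 0 ∨ n = 1 by omega) with h0 | h1
      · refine ⟨∅, Or.inl (by simp), ?_⟩
        simp only [h0, Finset.card_empty, Nat.cast_zero, Real.zero_rpow hc0.ne', le_refl]
      · have hpos : 0 < n := by omega
        obtain ⟨v⟩ := Fintype.card_pos_iff.mp (hn ▸ hpos)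
        refine ⟨{v}, Or.inl (by
          rw [Finset.coe_singleton]; exact Set.pairwise_singleton v G.Adj), ?_⟩
        simp only [h1, Finset.card_singleton, Nat.cast_one, Real.one_rpow, le_refl]
    · obtain ⟨x, y, hxy⟩ := Fintype.exists_pair_of_one_lt_card (α := V)
        (lt_of_lt_of_le one_lt_two (hn ▸ hge))
      have hcards : ({x, y} : Finset V).card = 2 := Finset.card_pair hxy
      have hcoe : (({x, y} : Finset V) : Set V) = {x, y} := by
        rw [Finset.coe_insert, Finset.coe_singleton]
      have hpair : ∀ (rel : V → V → Prop), Symmetric rel → rel x y →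
          (({x, y} : Finset V) : Set V).Pairwise rel := by
        intro rel hsymm hrel
        rw [hcoe]
        intro u hu v hv huv
        rcases hu with rfl | hu <;> rcases hv with rfl | hv
        · exact absurd rfl huv
        · rw [Set.mem_singleton_iff] at hv; subst hv; exact hrel
        · rw [Set.mem_singleton_iff] at hu; subst hu; exact hsymm hrel
        · rw [Set.mem_singleton_iff] at hu hv; subst hu; subst hv; exact absurd rfl huv
      by_cases hadj : G.Adj x y
      · exact ⟨{x, y}, Or.inl (hpair _ (fun _ _ h => h.symm) hadj), by rw [hcards]; push_cast; linarith⟩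
      · refine ⟨{x, y}, Or.inr (hpair _ (fun u v h h' => h h'.symm) hadj), ?_⟩
        rw [hcards]; push_cast; linarith
  · push_neg at hsmall
    have hn1 : 1 ≤ n := by
      by_contra hcon
      have : n = 0 := by omega
      rw [this] at hsmall
      rw [show ((0:ℕ):ℝ) = 0 by norm_num, Real.zero_rpow hc0.ne'] at hsmall
      linarith
    have hnR : (1:ℝ) ≤ (n:ℝ) := by exact_mod_cast hn1
    have hnpos : (0:ℝ) < (n:ℝ) := by linarith
    set δ : ℝ := (n:ℝ) ^ (-(4*c)) with hδdef
    have hδ0 : 0 < δ := Real.rpow_pos_of_pos hnpos _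
    have hδ1 : δ ≤ 1 := Real.rpow_le_one_of_one_le_of_nonpos hnR (by linarith)
    -- no splitting trees
    have hT : ∀ S : Finset V, ¬ SpTree G (2*k) S := by
      intro S hS
      obtain ⟨a, b, hab, _⟩ := sp_halfgraph G k S hS
      refine hno ⟨fun i => a i, fun j => b j, fun i j => ?_⟩
      rw [hab i i.isLt j j.isLt, Fin.lt_def]
    obtain ⟨B, _, hBgood, hBcard⟩ := good_subset G δ hδ0.le hδ1 (2*k) Finset.univ (hT _)
    rw [Finset.card_univ, ← hn] at hBcard
    -- key exponent computation
    set t : ℝ := (n:ℝ) ^ c with htdef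
    have ht2 : 2 < t := hsmall
    have ht0 : 0 < t := by linarith
    have h4c : (n:ℝ) ^ (4*c) = t ^ (4:ℕ) := by
      rw [htdef, ← Real.rpow_natCast ((n:ℝ)^c) 4, ← Real.rpow_mul hnpos.le]
      norm_num
      ring_nf
    have hδinv : δ * (n:ℝ) ^ (4*c) = 1 := by
      rw [hδdef, ← Real.rpow_add hnpos]
      norm_num
    have hkey : (n:ℝ) ^ (4*c) ≤ B.card := by
      have h1 : δ ^ (2*k) = (n:ℝ) ^ ((-(4*c)) * (2*k : ℕ)) := by
        rw [hδdef, ← Real.rpow_natCast ((n:ℝ)^(-(4*c))) (2*k), ← Real.rpow_mul hnpos.le]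
      have h2 : (-(4*c)) * ((2*k : ℕ) : ℝ) + 1 = 4*c := by
        rw [hcdef]
        push_cast
        field_simp
        ring
      calc (n:ℝ) ^ (4*c) = (n:ℝ) ^ ((-(4*c)) * ((2*k:ℕ):ℝ)) * (n:ℝ) := by
            rw [← Real.rpow_add_one hnpos.ne' _, h2]
        _ = δ ^ (2*k) * (n:ℝ) := by rw [h1]
        _ ≤ B.card := hBcard
    have hBpos : (0:ℝ) < B.card := by
      have : (0:ℝ) < (n:ℝ) ^ (4*c) := Real.rpow_pos_of_pos hnpos _
      linarith
    set d : ℝ := δ * B.card + 1 with hddef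
    have hd0 : 0 < d := by positivity
    have h1δB : 1 ≤ δ * B.card := by
      have := mul_le_mul_of_nonneg_left hkey hδ0.le
      rw [hδinv] at this
      linarith
    have hd2 : d ≤ 2 * (δ * B.card) := by linarith
    -- numeric core: if X ≥ B/2 then n^c ≤ X/d
    have hnum : ∀ X : ℝ, (B.card : ℝ) ≤ 2 * X → t ≤ X / d := by
      intro X hX
      rw [le_div_iff₀ hd0]
      have hδt : δ * t ^ (4:ℕ) = 1 := by rw [← h4c]; exact hδinv
      have ht3 : (8:ℝ) < t ^ (3:ℕ) := by
        nlinarith [mul_lt_mul_of_pos_left ht2 (mul_pos ht0 ht0), mul_lt_mul_of_pos_left ht2 ht0]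
      have h9 : (δ*t) * 8 < (δ*t) * t^(3:ℕ) :=
        mul_lt_mul_of_pos_left ht3 (mul_pos hδ0 ht0)
      have h10 : (δ*t) * t^(3:ℕ) = 1 := by rw [← hδt]; ring
      have htδ : t * δ ≤ 1/8 := by nlinarith
      nlinarith [mul_le_mul_of_nonneg_right htδ hBpos.le, mul_le_mul_of_nonneg_left hd2 ht0.le]
    -- split B into high/low degree parts
    set P : V → Prop := fun x => ((B.filter fun y => ¬ G.Adj x y).card : ℝ) ≤ δ * B.card with hP
    have hsplit : (B.filter P).card + (B.filter (fun x => ¬ P x)).card = B.card :=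
      Finset.card_filter_add_card_filter_not _
    rcases le_or_gt (B.card : ℝ) (2 * ((B.filter P).card : ℝ)) with hside | hside
    · -- clique side
      have hdeg : ∀ x ∈ B.filter P, ∃ D : Finset V, (D.card : ℝ) ≤ d ∧
          ∀ y ∈ B.filter P, y ∉ D → G.Adj x y ∧ x ≠ y := by
        intro x hx
        have hxP : P x := (Finset.mem_filter.mp hx).2
        rw [hP] at hxP
        refine ⟨B.filter (fun y => ¬ G.Adj x y), by linarith, ?_⟩
        intro y hy hyD
        have hyB : y ∈ B := (Finset.mem_filter.mp hy).1
        have hadj : G.Adj x y := by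
          by_contra hnadj
          exact hyD (Finset.mem_filter.mpr ⟨hyB, hnadj⟩)
        exact ⟨hadj, G.ne_of_adj hadj⟩
      obtain ⟨K, _, hKpair, hKcard⟩ := greedy G.Adj (fun _ _ h => h.symm) (B.filter P).card (B.filter P) d le_rfl hd0 hdeg
      refine ⟨K, Or.inl hKpair, ?_⟩
      calc (n:ℝ) ^ c = t := rfl
        _ ≤ ((B.filter P).card : ℝ) / d := hnum _ hside
        _ ≤ K.card := hKcard
    · -- independent side
      have hsideB : (B.card : ℝ) ≤ 2 * ((B.filter (fun x => ¬ P x)).card : ℝ) := by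
        have : ((B.filter P).card : ℝ) + ((B.filter (fun x => ¬ P x)).card : ℝ) = B.card := by
          exact_mod_cast hsplit
        linarith
      have hdeg : ∀ x ∈ B.filter (fun x => ¬ P x), ∃ D : Finset V, (D.card : ℝ) ≤ d ∧
          ∀ y ∈ B.filter (fun x => ¬ P x), y ∉ D → ¬ G.Adj x y ∧ x ≠ y := by
        intro x hx
        have hxB : x ∈ B := (Finset.mem_filter.mp hx).1
        have hxP : ¬ P x := (Finset.mem_filter.mp hx).2
        have hgood := (hBgood x hxB).resolve_right (by rw [hP] at hxP; exact hxP)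
        refine ⟨insert x (B.filter (fun y => G.Adj x y)), ?_, ?_⟩
        · have hci : (insert x (B.filter (fun y => G.Adj x y))).card ≤
              (B.filter (fun y => G.Adj x y)).card + 1 := Finset.card_insert_le _ _
          have hci' : ((insert x (B.filter (fun y => G.Adj x y))).card : ℝ) ≤
              ((B.filter (fun y => G.Adj x y)).card : ℝ) + 1 := by exact_mod_cast hci
          linarith
        · intro y hy hyD
          have hyB : y ∈ B := (Finset.mem_filter.mp hy).1
          have hne : x ≠ y := by
            intro h; exact hyD (h ▸ Finset.mem_insert_self x _)
          have hnadj : ¬ G.Adj x y := by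
            intro hadj
            exact hyD (Finset.mem_insert_of_mem (Finset.mem_filter.mpr ⟨hyB, hadj⟩))
          exact ⟨hnadj, hne⟩
      obtain ⟨K, _, hKpair, hKcard⟩ := greedy (fun u v => ¬ G.Adj u v)
        (fun u v h h' => h h'.symm) (B.filter (fun x => ¬ P x)).card
        (B.filter (fun x => ¬ P x)) d le_rfl hd0 hdeg
      refine ⟨K, Or.inr hKpair, ?_⟩
      calc (n:ℝ) ^ c = t := rfl
        _ ≤ ((B.filter (fun x => ¬ P x)).card : ℝ) / d := hnum _ hsideB
        _ ≤ K.card := hKcard
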